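/- arXiv:1103.3537 — 8 statements merged into one kernel-verified Lean document; each statement's English description precedes it below -/
import Mathlib

section
/- Let k be a field and let α, a, b, c, d ∈ k satisfy the twelve pentagon equations of the Fibonacci category: αa² + bc = α², αab + bd = 0, αcb + d² = 1, αca + dc = 0, a³ + bc = a², a²b + bd = b, ca² + cd = c, abc + d² = 0, αab = ab, αcb = d, αca = ca, α²d = cb. Then α = 1, b ≠ 0, d = −a, c = −a·b⁻¹ and a² = a + 1. Conversely, for any a, b ∈ k with a² = a + 1 and b ≠ 0, the values α = 1, d = −a, c = −a·b⁻¹ satisfy all twelve equations. -/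
/-- Solutions of the pentagon equations for the Fibonacci category. -/
theorem fibonacci_pentagon_solutions {k : Type*} [Field k] :
    (∀ α a b c d : k,
      α * a ^ 2 + b * c = α ^ 2 →
      α * a * b + b * d = 0 →
      α * c * b + d ^ 2 = 1 →
      α * c * a + d * c = 0 →
      a ^ 3 + b * c = a ^ 2 →
      a ^ 2 * b + b * d = b →
      c * a ^ 2 + c * d = c →
      a * b * c + d ^ 2 = 0 →
      α * a * b = a * b →
      α * c * b = d →
      α * c * a = c * a →
      α ^ 2 * d = c * b →
      α = 1 ∧ b ≠ 0 ∧ d = -a ∧ c = -a * b⁻¹ ∧ a ^ 2 = a + 1) ∧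
    (∀ a b : k, a ^ 2 = a + 1 → b ≠ 0 →
      ∀ α c d : k, α = 1 → d = -a → c = -a * b⁻¹ →
      α * a ^ 2 + b * c = α ^ 2 ∧
      α * a * b + b * d = 0 ∧
      α * c * b + d ^ 2 = 1 ∧
      α * c * a + d * c = 0 ∧
      a ^ 3 + b * c = a ^ 2 ∧
      a ^ 2 * b + b * d = b ∧
      c * a ^ 2 + c * d = c ∧
      a * b * c + d ^ 2 = 0 ∧
      α * a * b = a * b ∧
      α * c * b = d ∧
      α * c * a = c * a ∧
      α ^ 2 * d = c * b) := by
  constructor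
  · intro α a b c d h1 h2 h3 h4 h5 h6 h7 h8 h9 h10 h11 h12
    -- key: c*b*(α - a) = 1
    have key : c * b * (α - a) = 1 := by linear_combination h3 - h8
    have hb : b ≠ 0 := by
      rintro rfl
      simp at key
    have hc : c ≠ 0 := by
      rintro rfl
      simp at key
    have hα : α = 1 := by
      by_contra hα
      have ha0 : a = 0 := by
        have h11' : c * (a * (α - 1)) = 0 := by linear_combination h11
        rcases mul_eq_zero.mp h11' with h | h
        · exact absurd h hc
        · rcases mul_eq_zero.mp h with h | h
          · exact h
          · exact absurd (by linear_combination h) hα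
      rw [ha0] at h5 key
      have hbc : b * c = 0 := by linear_combination h5
      rw [show c * b * (α - 0) = b * c * α by ring, hbc] at key
      simp at key
    subst hα
    have hd : d = c * b := by linear_combination h12
    have hdd' : d + d ^ 2 = 1 := by linear_combination h3 + hd
    have hd0 : d ≠ 0 := by
      rintro rfl
      simp at hdd'
    have hda : d = -a := by
      have h8' : d * (a + d) = 0 := by linear_combination h8 + a * hd
      rcases mul_eq_zero.mp h8' with h | h
      · exact absurd h hd0
      · linear_combination h
    refine ⟨rfl, hb, hda, ?_, ?_⟩
    · field_simp
      linear_combination hda - hd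
    · linear_combination hdd' + (a - d - 1) * hda
  · intro a b ha hb α c d hα hd hc
    subst hα hd hc
    have hb' : b ≠ 0 := hb
    refine ⟨?_, by ring, ?_, ?_, ?_, ?_, ?_, ?_, by ring, ?_, by ring, ?_⟩ <;>
      field_simp <;>
      first
        | ring1
        | linear_combination b * ha
        | linear_combination a * b * ha
        | linear_combination (-(a * b ^ 2)) * ha
        | linear_combination ha
        | linear_combination a * ha
        | linear_combination (-a) * ha
end

section
/- Let k be a field and a ∈ k with a² = a + 1. Suppose u, w ∈ k satisfy the hexagon (braiding coherence) equations of the Fibonacci category: u² = w, u²a = ua² − a, wu = ua − a, and −w² = a − u. Then w = u² and u² = ua − 1. Conversely, if w = u² and u² = ua − 1 then all four equations hold. In particular a braiding on the Fibonacci category is completely determined by the single scalar u satisfying u² = ua − 1. -/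
/-- Solutions of the hexagon (braiding coherence) equations for the Fibonacci category. -/
theorem fibonacci_hexagon_solutions {k : Type*} [Field k] (a : k) (ha : a ^ 2 = a + 1) :
    (∀ u w : k,
      u ^ 2 = w →
      u ^ 2 * a = u * a ^ 2 - a →
      w * u = u * a - a →
      -w ^ 2 = a - u →
      w = u ^ 2 ∧ u ^ 2 = u * a - 1) ∧
    (∀ u w : k, w = u ^ 2 → u ^ 2 = u * a - 1 →
      u ^ 2 = w ∧
      u ^ 2 * a = u * a ^ 2 - a ∧
      w * u = u * a - a ∧
      -w ^ 2 = a - u) := by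
  have ha0 : a ≠ 0 := by
    intro h
    rw [h] at ha
    simp at ha
  constructor
  · intro u w h1 h2 h3 h4
    refine ⟨h1.symm, ?_⟩
    have : a * (u ^ 2 - (u * a - 1)) = 0 := by linear_combination h2
    rcases mul_eq_zero.mp this with h | h
    · exact absurd h ha0
    · linear_combination h
  · intro u w hw hu
    refine ⟨hw.symm, by linear_combination a * hu, ?_, ?_⟩
    · linear_combination u * hw + u * hu + a * hu + u * ha
    · linear_combination (-(w + u ^ 2)) * hw - (u ^ 2 + u * a + a ^ 2 - 1) * hu - (u * a + u - 1) * ha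
end

section
/- Let k be a field, a ∈ k with a² = a + 1, and b ∈ k nonzero. Then there exist nonzero f, g ∈ k such that, for G = diag(f, g²), one has G⁻¹ · [[a, b], [−a·b⁻¹, −a]] · G = [[a, 1], [−a, −a]]. Hence up to monoidal equivalence the associativity constraints for the Fibonacci category correspond exactly to the solutions a of a² = a + 1, with normalized matrix A = [[a, 1], [−a, −a]]. -/
/-- Up to monoidal equivalence the associativity constraint of the Fibonacci category can be
normalized so that its matrix becomes `[[a, 1], [-a, -a]]`. -/
theorem fibonacci_associativity_normalization {k : Type*} [Field k]
    (a b : k) (ha : a ^ 2 = a + 1) (hb : b ≠ 0) :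
    ∃ f g : k, f ≠ 0 ∧ g ≠ 0 ∧
      (!![f, 0; 0, g ^ 2] : Matrix (Fin 2) (Fin 2) k)⁻¹ *
          !![a, b; -a * b⁻¹, -a] * !![f, 0; 0, g ^ 2] =
        !![a, 1; -a, -a] := by
  refine ⟨b, 1, hb, one_ne_zero, ?_⟩
  have hinv : (!![b, 0; 0, (1:k) ^ 2] : Matrix (Fin 2) (Fin 2) k)⁻¹ =
      !![b⁻¹, 0; 0, 1] := by
    apply Matrix.inv_eq_right_inv
    ext i j
    fin_cases i <;> fin_cases j <;>
      simp [Matrix.mul_apply, Fin.sum_univ_succ, mul_inv_cancel₀ hb]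
  rw [hinv]
  ext i j
  fin_cases i <;> fin_cases j <;>
    simp [Matrix.mul_apply, Fin.sum_univ_succ] <;>
    field_simp
end

section
/- Let u ∈ ℂ be a primitive 10th root of unity and set a = u + u⁻¹. Then: (i) 1 + (1 − a)² = 3 − a and 3 − a ≠ 0; (ii) 1 + u⁻²(1 − a)² = u⁻² − u⁻⁴; (iii) 1 + u²(1 − a)² = u² − u⁴; (iv) (1 + u⁻²(1 − a)²) / (1 + u²(1 − a)²) = u⁻¹. -/
/-- Dimension and central charge computations for the Fibonacci modular category. -/
theorem fibonacci_dimension_and_central_charge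
    (u : ℂ) (hu : IsPrimitiveRoot u 10) (a : ℂ) (ha : a = u + u⁻¹) :
    (1 + (1 - a) ^ 2 = 3 - a ∧ 3 - a ≠ 0) ∧
    1 + u⁻¹ ^ 2 * (1 - a) ^ 2 = u⁻¹ ^ 2 - u⁻¹ ^ 4 ∧
    1 + u ^ 2 * (1 - a) ^ 2 = u ^ 2 - u ^ 4 ∧
    (1 + u⁻¹ ^ 2 * (1 - a) ^ 2) / (1 + u ^ 2 * (1 - a) ^ 2) = u⁻¹ := by
  have h0 : u ≠ 0 := hu.ne_zero (by norm_num)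
  have h10 : u ^ 10 = 1 := hu.pow_eq_one
  have h5 : u ^ 5 = -1 := by
    have h2 : (u ^ 5) ^ 2 = 1 := by rw [← pow_mul]; exact h10
    have hne : u ^ 5 ≠ 1 := hu.pow_ne_one_of_pos_of_lt (by norm_num) (by norm_num)
    exact (sq_eq_one_iff.mp h2).resolve_left hne
  have hm1 : u ≠ -1 := by
    intro h
    have : u ^ 2 = 1 := by rw [h]; ring
    exact hu.pow_ne_one_of_pos_of_lt (by norm_num) (by norm_num) this
  have hp : u ^ 4 - u ^ 3 + u ^ 2 - u + 1 = 0 := by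
    have hfac : (u + 1) * (u ^ 4 - u ^ 3 + u ^ 2 - u + 1) = 0 := by
      linear_combination h5
    rcases mul_eq_zero.mp hfac with h | h
    · exact absurd (eq_neg_of_add_eq_zero_left h) hm1
    · exact h
  subst ha
  have ha2 : (u + u⁻¹) ^ 2 = (u + u⁻¹) + 1 := by
    field_simp
    linear_combination hp
  refine ⟨⟨by linear_combination ha2, ?_⟩, ?_, ?_, ?_⟩
  · intro h
    have : (u + u⁻¹) = 3 := by linear_combination -h
    rw [this] at ha2; norm_num at ha2
  · field_simp
    linear_combination 2 * hp
  · field_simp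
    linear_combination 2 * hp
  · have hd : 1 + u ^ 2 * (1 - (u + u⁻¹)) ^ 2 = u ^ 2 - u ^ 4 := by
      field_simp; linear_combination 2 * hp
    have hn : 1 + u⁻¹ ^ 2 * (1 - (u + u⁻¹)) ^ 2 = u⁻¹ ^ 2 - u⁻¹ ^ 4 := by
      field_simp; linear_combination 2 * hp
    rw [hd, hn]
    have hdne : u ^ 2 - u ^ 4 ≠ 0 := by
      intro h
      have h2 : u ^ 2 = 1 := by
        have hfac : u ^ 2 * (1 - u ^ 2) = 0 := by linear_combination h
        rcases mul_eq_zero.mp hfac with h' | h'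
        · exact absurd h' (pow_ne_zero 2 h0)
        · linear_combination -h'
      exact hu.pow_ne_one_of_pos_of_lt (by norm_num) (by norm_num) h2
    have h1 : 1 - u ^ 2 ≠ 0 := fun h => hdne (by linear_combination (u^2) * h)
    field_simp
    linear_combination (u^2 - 1) * h5
end

section
/- Let u ∈ ℂ be a primitive 10th root of unity and set a = u + u⁻¹. Then u⁴ + u²(1 − a) = −1. Moreover the matrix S̃ = [[1, 1 − a], [1 − a, −1]] satisfies S̃·S̃ = (3 − a)·I and det S̃ = −(3 − a) ≠ 0; in particular S̃ is invertible. Hence the ribbon category Fib_u satisfies the non-degeneracy (modularity) condition. -/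
/-- The S̃-matrix of the Fibonacci ribbon category is non-degenerate, so Fib_u is modular. -/
theorem fibonacci_S_matrix_nondegenerate
    (u : ℂ) (hu : IsPrimitiveRoot u 10) (a : ℂ) (ha : a = u + u⁻¹) :
    u ^ 4 + u ^ 2 * (1 - a) = -1 ∧
    (!![1, 1 - a; 1 - a, -1] : Matrix (Fin 2) (Fin 2) ℂ) * !![1, 1 - a; 1 - a, -1] =
      (3 - a) • (1 : Matrix (Fin 2) (Fin 2) ℂ) ∧
    (!![1, 1 - a; 1 - a, -1] : Matrix (Fin 2) (Fin 2) ℂ).det = -(3 - a) ∧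
    -(3 - a) ≠ 0 ∧
    IsUnit (!![1, 1 - a; 1 - a, -1] : Matrix (Fin 2) (Fin 2) ℂ) := by
  have hu0 : u ≠ 0 := hu.ne_zero (by norm_num)
  have h10 : u ^ 10 = 1 := hu.pow_eq_one
  have h5ne : u ^ 5 ≠ 1 := hu.pow_ne_one_of_pos_of_lt (by norm_num) (by norm_num)
  have h5 : u ^ 5 = -1 := by
    have hmul : (u ^ 5 - 1) * (u ^ 5 + 1) = 0 := by linear_combination h10
    rcases mul_eq_zero.1 hmul with h | h
    · exact absurd (by linear_combination h) h5ne
    · linear_combination h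
  have hune : u ≠ -1 := by
    intro h
    have h2 : u ^ 2 ≠ 1 := hu.pow_ne_one_of_pos_of_lt (by norm_num) (by norm_num)
    exact h2 (by rw [h]; ring)
  have hq : u ^ 4 - u ^ 3 + u ^ 2 - u + 1 = 0 := by
    have hmul : (u + 1) * (u ^ 4 - u ^ 3 + u ^ 2 - u + 1) = 0 := by linear_combination h5
    rcases mul_eq_zero.1 hmul with h | h
    · exact absurd (by linear_combination h) hune
    · exact h
  have hinv : u⁻¹ = u ^ 9 := by
    field_simp
    linear_combination -h10
  have ha' : a = u - u ^ 4 := by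
    rw [ha, hinv]
    linear_combination u ^ 4 * h5
  have ha2 : a ^ 2 = a + 1 := by
    rw [ha']
    linear_combination hq + (u ^ 3 - 2) * h5
  have goal1 : u ^ 4 + u ^ 2 * (1 - a) = -1 := by
    rw [ha']
    linear_combination hq + u * h5
  have hdet : (!![1, 1 - a; 1 - a, -1] : Matrix (Fin 2) (Fin 2) ℂ).det = -(3 - a) := by
    rw [Matrix.det_fin_two_of]
    linear_combination -ha2
  have hne : -(3 - a) ≠ 0 := by
    intro h
    have h3 : a = 3 := by linear_combination h
    rw [h3] at ha2
    norm_num at ha2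
  refine ⟨goal1, ?_, hdet, hne, ?_⟩
  · ext i j
    fin_cases i <;> fin_cases j <;>
      simp [Matrix.mul_apply, Fin.sum_univ_succ, Matrix.one_apply] <;>
      linear_combination ha2
  · rw [Matrix.isUnit_iff_isUnit_det]
    exact (hdet ▸ hne : (!![1, 1 - a; 1 - a, -1] : Matrix (Fin 2) (Fin 2) ℂ).det ≠ 0).isUnit
end

section
/- Let M be a finite nonempty type and N a Fibonacci NIM-matrix on M that is connected. Then M has exactly two elements, and they can be labeled m, n so that N m m = 0, N m n = N n m = 1, and N n n = 1. In other words, up to isomorphism there is only one connected NIM-graph for the Fibonacci fusion rule. -/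
/-- A Fibonacci NIM-matrix on a finite type `M`: symmetric and satisfying `N² = N + I`,
encoding a NIM-representation of the Fibonacci fusion rule `{1, x}`, `x² = 1 + x`. -/
def IsFibNIM {M : Type*} [Fintype M] [DecidableEq M] (N : M → M → ℕ) : Prop :=
  (∀ m n : M, N m n = N n m) ∧
  (∀ m n : M, ∑ k, N m k * N k n = N m n + (if m = n then 1 else 0))

/-- Connectedness of the NIM-graph: there is no partition of `M` into two nonempty parts
not connected by any edge. -/
def FibNIMConnected {M : Type*} (N : M → M → ℕ) : Prop :=
  ¬ ∃ A : Set M, A.Nonempty ∧ Aᶜ.Nonempty ∧ ∀ a ∈ A, ∀ b ∈ Aᶜ, N a b = 0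

/-- Up to isomorphism there is only one connected NIM-graph for the Fibonacci fusion rule. -/
theorem fibonacci_unique_connected_NIM_graph
    {M : Type*} [Fintype M] [DecidableEq M] [Nonempty M]
    (N : M → M → ℕ) (hN : IsFibNIM N) (hconn : FibNIMConnected N) :
    Fintype.card M = 2 ∧
      ∃ m n : M, m ≠ n ∧ N m m = 0 ∧ N m n = 1 ∧ N n m = 1 ∧ N n n = 1 := by
  obtain ⟨hsym, hfus⟩ := hN
  have hdiagsq : ∀ m : M, ∑ k, N m k * N m k = N m m + 1 := by
    intro m
    have h := hfus m m
    rw [if_pos rfl] at h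
    rw [← h]
    exact Finset.sum_congr rfl fun k _ => by rw [hsym k m]
  have hdle : ∀ m : M, N m m ≤ 1 := by
    intro m
    have h1 := hdiagsq m
    have h2 : N m m * N m m ≤ N m m + 1 := by
      rw [← h1]
      exact Finset.single_le_sum (f := fun k => N m k * N m k)
        (fun _ _ => Nat.zero_le _) (Finset.mem_univ m)
    nlinarith
  -- there exists a vertex with zero diagonal
  have hex : ∃ m : M, N m m = 0 := by
    by_contra h
    push_neg at h
    obtain ⟨m⟩ := ‹Nonempty M›
    have hm1 : N m m = 1 := by have := hdle m; have := h m; omega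
    have hsum : ∑ k, N m k * N m k = 2 := by rw [hdiagsq, hm1]
    have herase : ∑ k ∈ Finset.univ.erase m, N m k * N m k = 1 := by
      have h2 := Finset.add_sum_erase Finset.univ (fun k => N m k * N m k)
        (Finset.mem_univ m)
      have h2' : N m m * N m m + ∑ x ∈ Finset.univ.erase m, N m x * N m x = 2 := by
        rw [h2, hsum]
      rw [hm1] at h2'
      omega
    obtain ⟨n, hn, hne⟩ := Finset.exists_ne_zero_of_sum_ne_zero (by
      rw [herase]; exact one_ne_zero)
    have hnm : n ≠ m := (Finset.mem_erase.mp hn).1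
    have hmn1 : 1 ≤ N m n := Nat.pos_of_ne_zero fun h0 => hne (by rw [h0, mul_zero])
    have hfmn := hfus m n
    rw [if_neg (Ne.symm hnm)] at hfmn
    have hpair : N m m * N m n + N m n * N n n ≤ ∑ k, N m k * N k n := by
      have h3 := Finset.sum_le_sum_of_subset
        (f := fun k => N m k * N k n) (Finset.subset_univ ({m, n} : Finset M))
      rw [Finset.sum_pair (Ne.symm hnm)] at h3
      exact h3
    have hn1 : N n n = 1 := by have := hdle n; have := h n; omega
    rw [hfmn, hm1, hn1] at hpair
    omega
  obtain ⟨m, hmm0⟩ := hex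
  have hsumm : ∑ k, N m k * N m k = 1 := by rw [hdiagsq, hmm0]
  obtain ⟨n, -, hne⟩ := Finset.exists_ne_zero_of_sum_ne_zero (by
    rw [hsumm]; exact one_ne_zero)
  have hmn : m ≠ n := by rintro rfl; rw [hmm0] at hne; simp at hne
  have hmnsq : N m n * N m n ≤ 1 := by
    rw [← hsumm]
    exact Finset.single_le_sum (f := fun k => N m k * N m k)
      (fun _ _ => Nat.zero_le _) (Finset.mem_univ n)
  have hpos : 1 ≤ N m n := Nat.pos_of_ne_zero fun h0 => hne (by rw [h0, mul_zero])
  have hmn1 : N m n = 1 := by nlinarith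
  -- row m vanishes off n
  have hrow : ∀ k, k ≠ n → N m k = 0 := by
    intro k hk
    have h2 := Finset.add_sum_erase Finset.univ (fun k => N m k * N m k)
      (Finset.mem_univ n)
    have h2' : N m n * N m n + ∑ j ∈ Finset.univ.erase n, N m j * N m j = 1 := by
      rw [h2, hsumm]
    rw [hmn1] at h2'
    have hz : ∑ j ∈ Finset.univ.erase n, N m j * N m j = 0 := by omega
    have := (Finset.sum_eq_zero_iff.mp hz) k
      (Finset.mem_erase.mpr ⟨hk, Finset.mem_univ k⟩)
    exact Nat.mul_eq_zero.mp this |>.elim id id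
  -- N n n = 1
  have hfmn := hfus m n
  rw [if_neg hmn] at hfmn
  have hsingle : ∑ k, N m k * N k n = N m n * N n n := by
    apply Finset.sum_eq_single
    · intro k _ hk; rw [hrow k hk, zero_mul]
    · intro h; exact absurd (Finset.mem_univ n) h
  rw [hsingle, hmn1, one_mul] at hfmn
  have hnn : N n n = 1 := by omega
  -- row n vanishes off {m, n}
  have hsqn : ∑ k, N n k * N n k = 2 := by rw [hdiagsq, hnn]
  have hrown : ∀ p, p ≠ m → p ≠ n → N n p = 0 := by
    intro p hpm hpn
    have hsd := Finset.sum_sdiff (f := fun k => N n k * N n k)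
      (Finset.subset_univ ({m, n} : Finset M))
    have hsd2 : ∑ k ∈ Finset.univ \ {m, n}, N n k * N n k
        + ∑ k ∈ ({m, n} : Finset M), N n k * N n k = 2 := by rw [hsd, hsqn]
    have hnm1 : N n m = 1 := by rw [← hsym m n]; exact hmn1
    rw [Finset.sum_pair hmn, hnm1, hnn] at hsd2
    have hz : ∑ k ∈ Finset.univ \ {m, n}, N n k * N n k = 0 := by omega
    have hp : p ∈ Finset.univ \ ({m, n} : Finset M) := by
      simp [hpm, hpn]
    have := (Finset.sum_eq_zero_iff.mp hz) p hp
    exact Nat.mul_eq_zero.mp this |>.elim id id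
  -- everything is m or n
  have hall : ∀ p : M, p = m ∨ p = n := by
    by_contra h
    push_neg at h
    obtain ⟨p, hpm, hpn⟩ := h
    apply hconn
    refine ⟨{m, n}, ⟨m, by simp⟩, ⟨p, by simp [hpm, hpn]⟩, ?_⟩
    rintro a (rfl | rfl) b hb
    · simp only [Set.mem_compl_iff, Set.mem_insert_iff, Set.mem_singleton_iff,
        not_or] at hb
      exact hrow b hb.2
    · simp only [Set.mem_compl_iff, Set.mem_insert_iff, Set.mem_singleton_iff,
        not_or] at hb
      exact hrown b hb.1 hb.2
  have hcard : Fintype.card M = 2 := by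
    have huniv : (Finset.univ : Finset M) = {m, n} := by
      ext p
      simpa using hall p
    rw [← Finset.card_univ, huniv, Finset.card_pair hmn]
  exact ⟨hcard, m, n, hmn, hmm0, hmn1, by rw [← hsym m n]; exact hmn1, hnn⟩
end

section
/- Let M be a finite type and N₁, …, N_ℓ a commuting family of Fibonacci NIM-matrices on M. For m ∈ M write m̄ ∈ {0,1}^ℓ for the vector with m̄_i = (N_i) m m. If m ≠ n and (N_j) m n ≠ 0 for some j ∈ {1, …, ℓ}, then m̄ and n̄ are comparable in the componentwise partial order on {0,1}^ℓ: either (N_i) m m ≤ (N_i) n n for all i, or (N_i) n n ≤ (N_i) m m for all i. -/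
lemma IsFibNIM.diag_le_one {M : Type*} [Fintype M] [DecidableEq M] {N : M → M → ℕ}
    (h : IsFibNIM N) (m : M) : N m m ≤ 1 := by
  have h2 := h.2 m m
  simp only [if_pos rfl, eq_self_iff_true, if_true] at h2
  have hle : N m m * N m m ≤ ∑ k, N m k * N k m :=
    Finset.single_le_sum (f := fun k => N m k * N k m) (fun k _ => Nat.zero_le _) (Finset.mem_univ m)
  rw [h2] at hle
  nlinarith

lemma IsFibNIM.rowsum_le {M : Type*} [Fintype M] [DecidableEq M] {N : M → M → ℕ}
    (h : IsFibNIM N) (m : M) : ∑ k, N m k ≤ N m m + 1 := by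
  have h2 := h.2 m m
  simp only [if_pos rfl, eq_self_iff_true, if_true] at h2
  calc ∑ k, N m k ≤ ∑ k, N m k * N k m := by
        refine Finset.sum_le_sum fun k _ => ?_
        rw [h.1 k m]
        rcases Nat.eq_zero_or_pos (N m k) with h0 | h0
        · simp [h0]
        · exact Nat.le_mul_of_pos_right _ h0
    _ = N m m + 1 := h2

/-- If `m ≠ n` are connected by `N`, at most one of them carries a loop. -/
lemma IsFibNIM.diag_add_le_one {M : Type*} [Fintype M] [DecidableEq M] {N : M → M → ℕ}
    (h : IsFibNIM N) {m n : M} (hmn : m ≠ n) (hedge : N m n ≠ 0) :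
    N m m + N n n ≤ 1 := by
  have h2 := h.2 m n
  rw [if_neg hmn, Nat.add_zero] at h2
  have hsub : ({m, n} : Finset M) ⊆ Finset.univ := Finset.subset_univ _
  have hpair : ∑ k ∈ ({m, n} : Finset M), N m k * N k n ≤ ∑ k, N m k * N k n :=
    Finset.sum_le_sum_of_subset hsub
  rw [Finset.sum_pair hmn, h2] at hpair
  have h1 : 1 ≤ N m n := Nat.one_le_iff_ne_zero.mpr hedge
  nlinarith [h.1 n m, hpair]

/-- Key lemma: if `A` has a loop at `m` but not at `n`, and the commuting matrix `B`
connects `m` to `n`, then `B` has a loop at `m`. -/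
lemma key_lemma {M : Type*} [Fintype M] [DecidableEq M] {A B : M → M → ℕ}
    (hA : IsFibNIM A) (hB : IsFibNIM B) {m n : M}
    (hc : ∑ k, A m k * B k n = ∑ k, B m k * A k n)
    (hAm : A m m = 1) (hAn : A n n = 0) (hBmn : B m n ≠ 0) (hmn : m ≠ n) :
    B m m = 1 := by
  by_contra hBm
  have hBm0 : B m m = 0 := by
    have := hB.diag_le_one m
    omega
  -- row sum of B at m is at most 1, so B m k = 0 for k ≠ n
  have hrow := hB.rowsum_le m
  rw [hBm0] at hrow
  have hzero : ∀ k, k ≠ n → B m k = 0 := by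
    intro k hk
    have hsub : ({k, n} : Finset M) ⊆ Finset.univ := Finset.subset_univ _
    have hpair : ∑ x ∈ ({k, n} : Finset M), B m x ≤ ∑ x, B m x :=
      Finset.sum_le_sum_of_subset hsub
    rw [Finset.sum_pair hk] at hpair
    have h1 : 1 ≤ B m n := Nat.one_le_iff_ne_zero.mpr hBmn
    omega
  -- RHS of commutation is 0
  have hrhs : ∑ k, B m k * A k n = 0 := by
    rw [Finset.sum_eq_single n]
    · rw [hAn, Nat.mul_zero]
    · intro k _ hk
      rw [hzero k hk, Nat.zero_mul]
    · intro h; exact absurd (Finset.mem_univ n) h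
  -- LHS of commutation is at least 1
  have hlhs : A m m * B m n ≤ ∑ k, A m k * B k n :=
    Finset.single_le_sum (f := fun k => A m k * B k n) (fun k _ => Nat.zero_le _) (Finset.mem_univ m)
  rw [hAm, Nat.one_mul] at hlhs
  have h1 : 1 ≤ B m n := Nat.one_le_iff_ne_zero.mpr hBmn
  omega

/-- If two distinct nodes of a NIM-representation of `Fib^ℓ` are connected by an edge of some
colour, their diagonal vectors are comparable in the componentwise order on `{0,1}^ℓ`. -/
theorem fibonacci_NIM_diagonal_comparable
    {M : Type*} [Fintype M] [DecidableEq M] {ℓ : ℕ}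
    (N : Fin ℓ → M → M → ℕ)
    (hfib : ∀ i, IsFibNIM (N i))
    (hcomm : ∀ (i j : Fin ℓ) (m n : M),
      ∑ k, N i m k * N j k n = ∑ k, N j m k * N i k n)
    (m n : M) (hmn : m ≠ n) (j : Fin ℓ) (hedge : N j m n ≠ 0) :
    (∀ i, N i m m ≤ N i n n) ∨ (∀ i, N i n n ≤ N i m m) := by
  by_contra h
  push_neg at h
  obtain ⟨⟨i, hi⟩, ⟨i', hi'⟩⟩ := h
  -- from hi : N i n n < N i m m, diagonal in {0,1}
  have hi_m : N i m m = 1 := by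
    have := (hfib i).diag_le_one m; omega
  have hi_n : N i n n = 0 := by omega
  have hi'_n : N i' n n = 1 := by
    have := (hfib i').diag_le_one n; omega
  have hi'_m : N i' m m = 0 := by omega
  -- key lemma gives N j m m = 1 and N j n n = 1
  have hjm : N j m m = 1 :=
    key_lemma (hfib i) (hfib j) (hcomm i j m n) hi_m hi_n hedge hmn
  have hedge' : N j n m ≠ 0 := by rw [(hfib j).1 n m]; exact hedge
  have hjn : N j n n = 1 :=
    key_lemma (hfib i') (hfib j) (hcomm i' j n m) hi'_n hi'_m hedge' (Ne.symm hmn)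
  -- but both diagonal entries of N j cannot be 1
  have := (hfib j).diag_add_le_one hmn hedge
  omega
end

section
/- Let M be a finite type, N₁, …, N_k a commuting family of Fibonacci NIM-matrices on M, and m ∈ M an element such that (N_i) m m = 0 for all i and (N_i·N_j) m m = 0 for all i ≠ j (where (N_i·N_j) m m = ∑_{p} (N_i) m p * (N_j) p m). For ε ∈ {0,1}^k let N_ε denote the matrix product ∏_{i : ε_i = 1} N_i (well defined since the N_i commute), with N_0 = I. Then for all ε, η ∈ {0,1}^k one has (N_ε · N_η) m m = (if ε = η then 1 else 0). In particular the assignment ε ↦ N_ε δ_m defines an embedding of the free NIM-representation Fib^k into M. -/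
/-- For `ε ∈ {0,1}^k`, the product `N_ε = ∏_{i : ε i = 1} N_i` of the matrices of a
(commuting) family, taken in the order of the indices, with `N_0 = I`. -/
def fibProd {M : Type*} [Fintype M] [DecidableEq M] {k : ℕ}
    (N : Fin k → M → M → ℕ) (ε : Fin k → Bool) : Matrix M M ℕ :=
  (List.ofFn fun i : Fin k => if ε i then (Matrix.of (N i) : Matrix M M ℕ) else 1).prod

/-- Square expansion: if each `b i` satisfies `b i ^ 2 = b i + 1`, then the square of the
product over `T` is the sum over subsets. -/
theorem fib_sq_expand {ι R : Type*} [CommSemiring R] [DecidableEq ι] (b : ι → R)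
    (hsq : ∀ i, b i * b i = b i + 1) (T : Finset ι) :
    (∏ i ∈ T, b i) * (∏ i ∈ T, b i) = ∑ U ∈ T.powerset, ∏ i ∈ U, b i := by
  rw [← Finset.prod_mul_distrib, Finset.prod_congr rfl (fun i _ => hsq i), Finset.prod_add]
  exact Finset.sum_congr rfl (fun U _ => by rw [Finset.prod_const_one, mul_one])

/-- Core lemma: under the freeness assumptions, `(∏_{i∈T} N_i) m m = δ_{T,∅}`. -/
theorem fib_aux {M : Type*} [Fintype M] [DecidableEq M] {k : ℕ}
    {R : Type*} [CommSemiring R] (φ : R →+* Matrix M M ℕ) (b : Fin k → R)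
    (hsq : ∀ i, b i * b i = b i + 1)
    (hsym : ∀ (i : Fin k) (p r : M), φ (b i) p r = φ (b i) r p)
    (m : M)
    (hd1 : ∀ i, φ (b i) m m = 0)
    (hd2 : ∀ i j, i ≠ j → (φ (b i) * φ (b j)) m m = 0) :
    ∀ T : Finset (Fin k), φ (∏ i ∈ T, b i) m m = if T = ∅ then 1 else 0 := by
  classical
  have hsq' : ∀ i, φ (b i) * φ (b i) = φ (b i) + 1 := fun i => by
    rw [← map_mul, hsq, map_add, map_one]
  have hsum1 : ∀ i, ∑ p, φ (b i) m p * φ (b i) m p = 1 := by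
    intro i
    have h : (φ (b i) * φ (b i)) m m = 1 := by
      rw [hsq' i, Matrix.add_apply, hd1 i, Matrix.one_apply_eq, Nat.zero_add]
    rw [Matrix.mul_apply] at h
    rw [← h]
    exact Finset.sum_congr rfl fun p _ => by rw [hsym i p m]
  have hrow : ∀ i, ∃ p0, p0 ≠ m ∧ ∀ p, φ (b i) m p = if p = p0 then 1 else 0 := by
    intro i
    have h1 := hsum1 i
    have hex : ∃ p, φ (b i) m p ≠ 0 := by
      by_contra h
      push_neg at h
      rw [Finset.sum_eq_zero (fun p _ => by rw [h p, zero_mul])] at h1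
      exact absurd h1 (by norm_num)
    obtain ⟨p0, hp0⟩ := hex
    have hle : φ (b i) m p0 * φ (b i) m p0 ≤ 1 := by
      rw [← h1]
      exact Finset.single_le_sum (f := fun p => φ (b i) m p * φ (b i) m p)
        (fun _ _ => Nat.zero_le _) (Finset.mem_univ p0)
    have hge1 : 1 ≤ φ (b i) m p0 := Nat.one_le_iff_ne_zero.mpr hp0
    have h01 : φ (b i) m p0 = 1 := by nlinarith
    refine ⟨p0, ?_, ?_⟩
    · intro hc
      rw [hc, hd1 i] at h01
      exact one_ne_zero h01.symm
    · intro p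
      by_cases hp : p = p0
      · simp [hp, h01]
      · simp only [hp, if_false]
        have hadd := Finset.add_sum_erase Finset.univ
          (fun x => φ (b i) m x * φ (b i) m x) (Finset.mem_univ p0)
        rw [h1, h01, one_mul] at hadd
        have hz : ∑ x ∈ Finset.univ.erase p0, φ (b i) m x * φ (b i) m x = 0 := by omega
        have := (Finset.sum_eq_zero_iff.mp hz) p (Finset.mem_erase.mpr ⟨hp, Finset.mem_univ p⟩)
        exact mul_self_eq_zero.mp this
  choose pt hptm hpt using hrow
  have hptinj : ∀ i j, i ≠ j → pt i ≠ pt j := by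
    intro i j hij he
    have h2 := hd2 i j hij
    rw [Matrix.mul_apply] at h2
    have h3 := (Finset.sum_eq_zero_iff.mp h2) (pt i) (Finset.mem_univ _)
    rw [hpt i (pt i), if_pos rfl, one_mul] at h3
    rw [hsym j, he, hpt j (pt j), if_pos rfl] at h3
    exact one_ne_zero h3
  have hQsym : ∀ T : Finset (Fin k), ∀ p r,
      φ (∏ i ∈ T, b i) p r = φ (∏ i ∈ T, b i) r p := by
    intro T
    induction T using Finset.induction_on with
    | empty => intro p r; simp [Matrix.one_apply, eq_comm]
    | @insert i T hi IH =>
      intro p r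
      rw [Finset.prod_insert hi, map_mul]
      have e2 : φ (b i) * φ (∏ x ∈ T, b x) = φ (∏ x ∈ T, b x) * φ (b i) := by
        rw [← map_mul, ← map_mul, mul_comm]
      conv_rhs => rw [e2]
      rw [Matrix.mul_apply, Matrix.mul_apply]
      refine Finset.sum_congr rfl fun s _ => ?_
      rw [hsym i p s, IH s r]
      exact mul_comm _ _
  have hcore : ∀ n, ∀ T : Finset (Fin k), T.card = n → T ≠ ∅ → φ (∏ i ∈ T, b i) m m = 0 := by
    intro n
    induction n using Nat.strong_induction_on with
    | _ n IH =>
      intro T hTn hTne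
      by_cases h1 : T.card = 1
      · obtain ⟨i, rfl⟩ := Finset.card_eq_one.mp h1
        rw [Finset.prod_singleton]
        exact hd1 i
      · have h2 : 2 ≤ T.card := by
          have := Finset.card_pos.mpr (Finset.nonempty_iff_ne_empty.mpr hTne)
          omega
        set a := φ (∏ i ∈ T, b i) m m with ha
        have hRHS : (φ (∏ i ∈ T, b i) * φ (∏ i ∈ T, b i)) m m = 1 + a := by
          rw [← map_mul, fib_sq_expand b hsq T, map_sum, Matrix.sum_apply]
          rw [← Finset.add_sum_erase _ _ (Finset.empty_mem_powerset T)]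
          have hTm : T ∈ T.powerset.erase ∅ :=
            Finset.mem_erase.mpr ⟨hTne, Finset.mem_powerset_self T⟩
          rw [← Finset.add_sum_erase _ _ hTm]
          have hz : ∑ U ∈ (T.powerset.erase ∅).erase T, φ (∏ i ∈ U, b i) m m = 0 := by
            refine Finset.sum_eq_zero fun U hU => ?_
            simp only [Finset.mem_erase, Finset.mem_powerset] at hU
            obtain ⟨hUT, hU0, hUsub⟩ := hU
            exact IH U.card (hTn ▸ Finset.card_lt_card (hUsub.ssubset_of_ne hUT)) U rfl hU0
          rw [hz, Finset.prod_empty, map_one, Matrix.one_apply_eq, ← ha]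
          omega
        have hLHS : (φ (∏ i ∈ T, b i) * φ (∏ i ∈ T, b i)) m m
            = ∑ p, φ (∏ i ∈ T, b i) m p * φ (∏ i ∈ T, b i) m p := by
          rw [Matrix.mul_apply]
          exact Finset.sum_congr rfl fun p _ => by rw [hQsym T p m]
        have heq : ∑ p, φ (∏ i ∈ T, b i) m p * φ (∏ i ∈ T, b i) m p = 1 + a := by
          rw [← hLHS, hRHS]
        have hpti : ∀ i ∈ T, φ (∏ x ∈ T, b x) m (pt i) = a := by
          intro i hi
          have e1 : b i * ∏ x ∈ T, b x = (∏ x ∈ T, b x) + ∏ x ∈ T.erase i, b x := by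
            conv_lhs => rw [← Finset.mul_prod_erase T b hi, ← mul_assoc, hsq i]
            rw [add_mul, one_mul, Finset.mul_prod_erase T b hi]
          have e3 : φ (∏ x ∈ T.erase i, b x) m m = 0 := by
            refine IH (T.erase i).card (hTn ▸ Finset.card_erase_lt_of_mem hi) _ rfl ?_
            intro hc
            have hce := Finset.card_erase_of_mem hi
            rw [hc, Finset.card_empty] at hce
            omega
          have e2 : (φ (b i) * φ (∏ x ∈ T, b x)) m m = a := by
            rw [← map_mul, e1, map_add, Matrix.add_apply, ← ha, e3, Nat.add_zero]
          have e4 : (φ (b i) * φ (∏ x ∈ T, b x)) m m = φ (∏ x ∈ T, b x) (pt i) m := by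
            rw [Matrix.mul_apply]
            calc ∑ p, φ (b i) m p * φ (∏ x ∈ T, b x) p m
                = ∑ p, if p = pt i then φ (∏ x ∈ T, b x) p m else 0 :=
                  Finset.sum_congr rfl fun p _ => by
                    rw [hpt i p]; split_ifs <;> simp
              _ = φ (∏ x ∈ T, b x) (pt i) m := by
                  rw [Finset.sum_ite_eq' Finset.univ (pt i)
                    (fun p => φ (∏ x ∈ T, b x) p m), if_pos (Finset.mem_univ _)]
          rw [hQsym T m (pt i), ← e4, e2]
        obtain ⟨i, hi, j, hj, hij⟩ := Finset.one_lt_card.mp h2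
        have hmem1 : m ∉ ({pt i, pt j} : Finset M) := by
          simp only [Finset.mem_insert, Finset.mem_singleton]
          push_neg
          exact ⟨fun h => hptm i h.symm, fun h => hptm j h.symm⟩
        have hmem2 : pt i ∉ ({pt j} : Finset M) := by
          simp only [Finset.mem_singleton]
          exact hptinj i j hij
        have hm3 : ∑ p ∈ ({m, pt i, pt j} : Finset M),
            φ (∏ x ∈ T, b x) m p * φ (∏ x ∈ T, b x) m p = a * a + (a * a + a * a) := by
          rw [Finset.sum_insert hmem1, Finset.sum_insert hmem2, Finset.sum_singleton,
            ← ha, hpti i hi, hpti j hj]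
        have hge : ∑ p ∈ ({m, pt i, pt j} : Finset M),
            φ (∏ x ∈ T, b x) m p * φ (∏ x ∈ T, b x) m p ≤ 1 + a := by
          rw [← heq]
          exact Finset.sum_le_sum_of_subset (Finset.subset_univ _)
        rw [hm3] at hge
        by_contra h0
        have : 1 ≤ a := Nat.one_le_iff_ne_zero.mpr h0
        nlinarith
  intro T
  by_cases hT : T = ∅
  · subst hT; simp
  · simp [hT, hcore T.card T rfl hT]

/-- Orthonormality of the products over two finsets, given the core diagonal lemma. -/
theorem fib_pair {M : Type*} [Fintype M] [DecidableEq M] {k : ℕ}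
    {R : Type*} [CommSemiring R] (φ : R →+* Matrix M M ℕ) (b : Fin k → R)
    (hsq : ∀ i, b i * b i = b i + 1) (m : M)
    (hval : ∀ T : Finset (Fin k), φ (∏ i ∈ T, b i) m m = if T = ∅ then 1 else 0)
    (E H : Finset (Fin k)) :
    φ ((∏ i ∈ E, b i) * (∏ i ∈ H, b i)) m m = if E = H then 1 else 0 := by
  classical
  have hmul : (∏ i ∈ E, b i) * (∏ i ∈ H, b i)
      = ∑ U ∈ (E ∩ H).powerset, ∏ i ∈ ((E \ H) ∪ (H \ E)) ∪ U, b i := by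
    have h1 : ∏ i ∈ E, b i = (∏ i ∈ E \ H, b i) * ∏ i ∈ E ∩ H, b i := by
      conv_lhs => rw [← Finset.sdiff_union_inter E H]
      exact Finset.prod_union (Finset.disjoint_sdiff_inter E H)
    have h2 : ∏ i ∈ H, b i = (∏ i ∈ H \ E, b i) * ∏ i ∈ E ∩ H, b i := by
      conv_lhs => rw [← Finset.sdiff_union_inter H E]
      rw [Finset.prod_union (Finset.disjoint_sdiff_inter H E), Finset.inter_comm]
    rw [h1, h2]
    have h3 : ((∏ i ∈ E \ H, b i) * ∏ i ∈ E ∩ H, b i) *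
        ((∏ i ∈ H \ E, b i) * ∏ i ∈ E ∩ H, b i)
        = ((∏ i ∈ E \ H, b i) * ∏ i ∈ H \ E, b i) *
          ((∏ i ∈ E ∩ H, b i) * ∏ i ∈ E ∩ H, b i) := by ring
    rw [h3, fib_sq_expand b hsq (E ∩ H), Finset.mul_sum]
    refine Finset.sum_congr rfl fun U hU => ?_
    have hUsub := Finset.mem_powerset.mp hU
    have hdisj1 : Disjoint (E \ H) (H \ E) := by
      rw [Finset.disjoint_left]
      intro x hx hx2
      simp only [Finset.mem_sdiff] at hx hx2
      tauto
    have hdisj2 : Disjoint ((E \ H) ∪ (H \ E)) U := by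
      rw [Finset.disjoint_left]
      intro x hx hxU
      have hxm := hUsub hxU
      simp only [Finset.mem_union, Finset.mem_sdiff, Finset.mem_inter] at hx hxm
      tauto
    rw [Finset.prod_union hdisj2, Finset.prod_union hdisj1]
  rcases eq_or_ne E H with rfl | hne
  · simp only [if_pos rfl]
    rw [hmul, map_sum, Matrix.sum_apply]
    have hc : ∀ U ∈ (E ∩ E).powerset,
        φ (∏ i ∈ ((E \ E) ∪ (E \ E)) ∪ U, b i) m m = if U = ∅ then 1 else 0 := by
      intro U _
      rw [Finset.sdiff_self, Finset.union_self, Finset.empty_union, hval]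
    rw [Finset.sum_congr rfl hc,
      Finset.sum_ite_eq' ((E ∩ E).powerset) (∅ : Finset (Fin k)) (fun _ => 1)]
    simp
  · rw [if_neg hne, hmul, map_sum, Matrix.sum_apply]
    refine Finset.sum_eq_zero fun U _ => ?_
    rw [hval, if_neg ?_]
    intro hc
    rw [Finset.union_eq_empty, Finset.union_eq_empty] at hc
    exact hne (Finset.Subset.antisymm
      (Finset.sdiff_eq_empty_iff_subset.mp hc.1.1)
      (Finset.sdiff_eq_empty_iff_subset.mp hc.1.2))

/-- If `(N_i) m m = 0` for all `i` and `(N_i N_j) m m = 0` for all `i ≠ j`, then the vectors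
`N_ε δ_m`, `ε ∈ {0,1}^k`, are orthonormal: `(N_ε N_η) m m = δ_{ε,η}`. In particular
`ε ↦ N_ε δ_m` embeds the free NIM-representation `Fib^k` into `M`. -/
theorem fibonacci_NIM_free_embedding
    {M : Type*} [Fintype M] [DecidableEq M] {k : ℕ}
    (N : Fin k → M → M → ℕ)
    (hfib : ∀ i, IsFibNIM (N i))
    (hcomm : ∀ (i j : Fin k) (m n : M),
      ∑ p, N i m p * N j p n = ∑ p, N j m p * N i p n)
    (m : M)
    (hdiag : ∀ i, N i m m = 0)
    (hdiag2 : ∀ i j : Fin k, i ≠ j → ∑ p, N i m p * N j p m = 0) :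
    ∀ ε η : Fin k → Bool,
      (fibProd N ε * fibProd N η) m m = if ε = η then 1 else 0 := by
  classical
  set A : Fin k → Matrix M M ℕ := fun i => Matrix.of (N i) with hA
  have hsqA : ∀ i, A i * A i = A i + 1 := by
    intro i
    ext p r
    rw [Matrix.mul_apply, Matrix.add_apply, Matrix.one_apply]
    exact (hfib i).2 p r
  have hAcomm : ∀ i j, A i * A j = A j * A i := by
    intro i j
    ext p r
    rw [Matrix.mul_apply, Matrix.mul_apply]
    exact hcomm i j p r
  set S := Subsemiring.closure (Set.range A) with hS
  letI : CommSemiring S := Subsemiring.closureCommSemiringOfComm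
    (by rintro _ ⟨i, rfl⟩ _ ⟨j, rfl⟩; exact hAcomm i j)
  set b : Fin k → S := fun i => ⟨A i, Subsemiring.subset_closure ⟨i, rfl⟩⟩ with hb
  set φ : S →+* Matrix M M ℕ := S.subtype with hφ
  have hbsq : ∀ i, b i * b i = b i + 1 := by
    intro i
    apply Subtype.ext
    show A i * A i = A i + 1
    exact hsqA i
  have hsym' : ∀ (i : Fin k) (p r : M), φ (b i) p r = φ (b i) r p :=
    fun i p r => (hfib i).1 p r
  have hd1 : ∀ i, φ (b i) m m = 0 := fun i => hdiag i
  have hd2 : ∀ i j, i ≠ j → (φ (b i) * φ (b j)) m m = 0 := by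
    intro i j hij
    rw [Matrix.mul_apply]
    exact hdiag2 i j hij
  have key := fib_aux φ b hbsq hsym' m hd1 hd2
  have hfib_eq : ∀ ε : Fin k → Bool,
      fibProd N ε = φ (∏ i ∈ Finset.univ.filter (fun i => ε i = true), b i) := by
    intro ε
    rw [Finset.prod_filter]
    rw [← List.prod_ofFn (f := fun i => if ε i = true then b i else 1)]
    rw [map_list_prod, List.map_ofFn]
    unfold fibProd
    have hfun : (⇑φ ∘ fun i => if ε i = true then b i else 1)
        = fun i : Fin k => if ε i = true then (Matrix.of (N i) : Matrix M M ℕ) else 1 := by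
      funext i
      by_cases h : ε i = true
      · rw [Function.comp_apply, if_pos h, if_pos h]; rfl
      · rw [Function.comp_apply, if_neg h, if_neg h, map_one]
    rw [hfun]
  intro ε η
  rw [hfib_eq ε, hfib_eq η, ← map_mul, fib_pair φ b hbsq m key]
  have hiff : (Finset.univ.filter (fun i => ε i = true)
      = Finset.univ.filter (fun i => η i = true)) ↔ ε = η := by
    constructor
    · intro h
      funext i
      have := Finset.ext_iff.mp h i
      simp only [Finset.mem_filter, Finset.mem_univ, true_and] at this
      cases hε : ε i <;> cases hη : η i
      · rfl
      · rw [hε, hη] at this; simp at this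
      · rw [hε, hη] at this; simp at this
      · rfl
    · intro h; rw [h]
  simp only [hiff]
end
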